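/- Let q ≥ 0, P ≥ 0, c ≥ 0 and t² > 0 be real numbers with D = P·q + c + t², and define e(v) = v²·D − 2·v·√(P·q) + 1 for v ∈ ℝ. Then the infimum over v ∈ ℝ and d ∈ (0, ∞) of d·e(v) − ln(d) equals 1 − ln(1 + γ), where γ = P·q/(c + t²), and it is attained at v* = √(P·q)/D and d* = 1 + γ. -/

import Mathlib

/-- Equivalence of (P5) and (P6): with e(v) = v²·D − 2·v·√(P·q) + 1,
D = P·q + c + t², γ = P·q/(c + t²), the infimum over v ∈ ℝ and d > 0 of
d·e(v) − ln d equals 1 − ln(1 + γ), attained at v* = √(P·q)/D, d* = 1 + γ. -/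
theorem stmt_7 (q P c t2 : ℝ) (hq : 0 ≤ q) (hP : 0 ≤ P) (hc : 0 ≤ c) (ht : 0 < t2) :
    IsLeast
      {x : ℝ | ∃ v d : ℝ, 0 < d ∧
        x = d * (v ^ 2 * (P * q + c + t2) - 2 * v * Real.sqrt (P * q) + 1) - Real.log d}
      (1 - Real.log (1 + P * q / (c + t2))) ∧
    (1 + P * q / (c + t2)) *
        ((Real.sqrt (P * q) / (P * q + c + t2)) ^ 2 * (P * q + c + t2)
          - 2 * (Real.sqrt (P * q) / (P * q + c + t2)) * Real.sqrt (P * q) + 1)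
        - Real.log (1 + P * q / (c + t2))
      = 1 - Real.log (1 + P * q / (c + t2)) := by
  have hPq : 0 ≤ P * q := mul_nonneg hP hq
  have hct : 0 < c + t2 := by linarith
  have hD : 0 < P * q + c + t2 := by linarith
  have hs : Real.sqrt (P * q) ^ 2 = P * q := Real.sq_sqrt hPq
  have hgamma : 0 < 1 + P * q / (c + t2) := by positivity
  -- value at the optimizer
  have hval :
      ((Real.sqrt (P * q) / (P * q + c + t2)) ^ 2 * (P * q + c + t2)
          - 2 * (Real.sqrt (P * q) / (P * q + c + t2)) * Real.sqrt (P * q) + 1)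
        = (c + t2) / (P * q + c + t2) := by
    set s := Real.sqrt (P * q) with hsdef
    field_simp
    linear_combination (-1 : ℝ) * hs
  have hinv : (1 + P * q / (c + t2)) = (P * q + c + t2) / (c + t2) := by
    field_simp; ring
  have hprod : (1 + P * q / (c + t2)) * ((c + t2) / (P * q + c + t2)) = 1 := by
    rw [hinv]; field_simp
  have hattain :
      (1 + P * q / (c + t2)) *
        ((Real.sqrt (P * q) / (P * q + c + t2)) ^ 2 * (P * q + c + t2)
          - 2 * (Real.sqrt (P * q) / (P * q + c + t2)) * Real.sqrt (P * q) + 1)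
        - Real.log (1 + P * q / (c + t2))
      = 1 - Real.log (1 + P * q / (c + t2)) := by
    rw [hval, hprod]
  refine ⟨⟨⟨Real.sqrt (P * q) / (P * q + c + t2), 1 + P * q / (c + t2), hgamma, ?_⟩, ?_⟩,
    hattain⟩
  · exact hattain.symm
  · rintro x ⟨v, d, hd, rfl⟩
    have he : (c + t2) / (P * q + c + t2)
        ≤ v ^ 2 * (P * q + c + t2) - 2 * v * Real.sqrt (P * q) + 1 := by
      rw [div_le_iff₀ hD]
      nlinarith [sq_nonneg (v * (P * q + c + t2) - Real.sqrt (P * q)), hs, hD]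
    have hm : 0 < (c + t2) / (P * q + c + t2) := by positivity
    have hstep : d * ((c + t2) / (P * q + c + t2)) - Real.log d
        ≤ d * (v ^ 2 * (P * q + c + t2) - 2 * v * Real.sqrt (P * q) + 1) - Real.log d := by
      have := mul_le_mul_of_nonneg_left he hd.le
      linarith
    have hlog : Real.log (d * ((c + t2) / (P * q + c + t2)))
        ≤ d * ((c + t2) / (P * q + c + t2)) - 1 :=
      Real.log_le_sub_one_of_pos (by positivity)
    rw [Real.log_mul hd.ne' hm.ne'] at hlog
    have hlm : Real.log ((c + t2) / (P * q + c + t2))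
        = - Real.log (1 + P * q / (c + t2)) := by
      rw [hinv, Real.log_div hct.ne' hD.ne', Real.log_div hD.ne' hct.ne']
      ring
    rw [hlm] at hlog
    linarith
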